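/- Let g : ℝ → ℝ be convex and differentiable, and let D(a,y) = g(y) − g(a) − (deriv g a)·(y − a). Let (X, Y) be random variables on a probability space with X taking values in a standard Borel space 𝒳 and Y real-valued and integrable, with g(Y) integrable, and let h*(X) = E[Y | X] be (a version of) the conditional expectation of Y given X. Then for every measurable h : 𝒳 → ℝ such that D(h(X), Y) is integrable, E[D(h(X), Y)] ≥ E[D(h*(X), Y)]; that is, the conditional expectation minimizes the expected Bregman loss among all measurable predictors. -/

import Mathlib

open MeasureTheory ProbabilityTheory

lemma bregmanLoss_nonneg' (g : ℝ → ℝ) (hg_convex : ConvexOn ℝ Set.univ g)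
    (hg_diff : Differentiable ℝ g) (a y : ℝ) :
    0 ≤ g y - g a - deriv g a * (y - a) := by
  rcases lt_trichotomy a y with hlt | heq | hgt
  · have h2 : deriv g a ≤ (g y - g a) / (y - a) := by
      have := hg_convex.deriv_le_slope (Set.mem_univ a) (Set.mem_univ y) hlt (hg_diff a)
      rwa [slope_def_field] at this
    have h3 := (le_div_iff₀ (by linarith)).mp h2
    linarith
  · simp [heq]
  · have h2 : (g a - g y) / (a - y) ≤ deriv g a := by
      have := hg_convex.slope_le_deriv (Set.mem_univ y) (Set.mem_univ a) hgt (hg_diff a)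
      rwa [slope_def_field] at this
    have h3 := (div_le_iff₀ (by linarith)).mp h2
    nlinarith

noncomputable def bregmanLoss (g : ℝ → ℝ) (a y : ℝ) : ℝ :=
  g y - g a - deriv g a * (y - a)

lemma bregman_aux {Ω : Type*} {m m0 : MeasurableSpace Ω} (hm : m ≤ m0)
    (μ : Measure Ω) [IsProbabilityMeasure μ]
    (g : ℝ → ℝ) (hg_convex : ConvexOn ℝ Set.univ g) (hg_diff : Differentiable ℝ g)
    (Y : Ω → ℝ) (hY_int : Integrable Y μ)
    (b : Ω → ℝ) (hb_m : Measurable[m] b) (hb_ce : b =ᵐ[μ] μ[Y|m])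
    (a : Ω → ℝ) (ha_m : Measurable[m] a)
    (ha_int : Integrable (fun ω => bregmanLoss g (a ω) (Y ω)) μ)
    (hb_int : Integrable (fun ω => bregmanLoss g (b ω) (Y ω)) μ) :
    ∫ ω, bregmanLoss g (b ω) (Y ω) ∂μ ≤ ∫ ω, bregmanLoss g (a ω) (Y ω) ∂μ := by
  have hnonneg : ∀ a y, 0 ≤ bregmanLoss g a y := fun a y =>
    bregmanLoss_nonneg' g hg_convex hg_diff a y
  have hderiv_meas : Measurable (deriv g) := measurable_deriv g
  have hb_int' : Integrable b μ := integrable_condExp.congr hb_ce.symm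
  set V : Ω → ℝ := fun ω => Y ω - b ω with hV_def
  have hV_int : Integrable V μ := hY_int.sub hb_int'
  have hV0 : μ[V|m] =ᵐ[μ] 0 := by
    have h1 : μ[V|m] =ᵐ[μ] μ[Y|m] - μ[b|m] := condExp_sub hY_int hb_int' m
    have h2 : μ[b|m] = b :=
      condExp_of_stronglyMeasurable hm hb_m.stronglyMeasurable hb_int'
    filter_upwards [h1, hb_ce] with ω hω1 hω2
    rw [hω1]
    simp only [Pi.sub_apply, h2, Pi.zero_apply]
    rw [← hω2]
    ring
  set C : Ω → ℝ := fun ω => deriv g (b ω) - deriv g (a ω) with hC_def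
  have hC_m : Measurable[m] C := (hderiv_meas.comp hb_m).sub (hderiv_meas.comp ha_m)
  set Z : Ω → ℝ := fun ω => bregmanLoss g (a ω) (Y ω) - bregmanLoss g (b ω) (Y ω) with hZ_def
  have hZ_int : Integrable Z μ := ha_int.sub hb_int
  set W : Ω → ℝ := fun ω => bregmanLoss g (a ω) (b ω) with hW_def
  have hZWCV : ∀ ω, Z ω = W ω + C ω * V ω := by
    intro ω
    simp only [hZ_def, hW_def, hC_def, hV_def, bregmanLoss]
    ring
  set A : ℕ → Set Ω := fun n => {ω | |C ω| ≤ (n : ℝ)} with hA_def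
  have hA_m : ∀ n, MeasurableSet[m] (A n) := fun n => (measurable_abs.comp hC_m) measurableSet_Iic
  have hA_mono : Monotone A := fun i j hij ω hω => by
    simp only [hA_def, Set.mem_setOf_eq] at hω ⊢
    exact le_trans hω (Nat.cast_le.mpr hij)
  have hA_union : ⋃ n, A n = Set.univ := by
    ext ω
    simp only [Set.mem_iUnion, Set.mem_univ, iff_true, hA_def, Set.mem_setOf_eq]
    exact exists_nat_ge |C ω|
  set f : ℕ → Ω → ℝ := fun n => (A n).indicator C with hf_def
  have hf_m : ∀ n, StronglyMeasurable[m] (f n) :=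
    fun n => (hC_m.indicator (hA_m n)).stronglyMeasurable
  have hf_bound : ∀ n, ∀ ω, ‖f n ω‖ ≤ (n : ℝ) := by
    intro n ω
    simp only [hf_def, Set.indicator]
    split_ifs with hω
    · exact hω
    · simp
  have hfV_int : ∀ n, Integrable (f n * V) μ := fun n =>
    hV_int.bdd_mul ((hf_m n).mono hm).aestronglyMeasurable
      (Filter.Eventually.of_forall (hf_bound n))
  have key : ∀ n, ∫ ω, f n ω * V ω ∂μ = 0 := by
    intro n
    have h1 : μ[f n * V|m] =ᵐ[μ] f n * μ[V|m] :=
      condExp_stronglyMeasurable_mul_of_bound hm (hf_m n) hV_int n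
        (Filter.Eventually.of_forall (hf_bound n))
    calc ∫ ω, f n ω * V ω ∂μ = ∫ ω, (f n * V) ω ∂μ := rfl
      _ = ∫ ω, (μ[f n * V|m]) ω ∂μ := (integral_condExp hm).symm
      _ = ∫ ω, (f n * μ[V|m]) ω ∂μ := integral_congr_ae h1
      _ = 0 := by
          rw [← integral_zero Ω ℝ (μ := μ)]
          refine integral_congr_ae ?_
          filter_upwards [hV0] with ω hω
          simp [hω]
  have hCV_intOn : ∀ n, IntegrableOn (fun ω => C ω * V ω) (A n) μ := by
    intro n
    refine (integrable_indicator_iff (hm _ (hA_m n))).mp ?_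
    refine (hfV_int n).congr ?_
    refine Filter.Eventually.of_forall fun ω => ?_
    simp only [hf_def, Pi.mul_apply, Set.indicator]
    split_ifs <;> simp
  have hW_intOn : ∀ n, IntegrableOn W (A n) μ := by
    intro n
    refine (integrable_indicator_iff (hm _ (hA_m n))).mp ?_
    have heq : (A n).indicator W = fun ω => (A n).indicator Z ω - (f n * V) ω := by
      funext ω
      simp only [Set.indicator, hf_def, Pi.mul_apply]
      split_ifs with hω
      · rw [hZWCV ω]; ring
      · simp
    rw [heq]
    exact (hZ_int.indicator (hm _ (hA_m n))).sub (hfV_int n)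
  have hsetkey : ∀ n, 0 ≤ ∫ ω in A n, Z ω ∂μ := by
    intro n
    have heq : ∫ ω in A n, Z ω ∂μ = ∫ ω in A n, (W ω + C ω * V ω) ∂μ :=
      setIntegral_congr_fun (hm _ (hA_m n)) fun ω _ => hZWCV ω
    rw [heq, integral_add (hW_intOn n) (hCV_intOn n)]
    have hCV0 : ∫ ω in A n, C ω * V ω ∂μ = 0 := by
      rw [← integral_indicator (hm _ (hA_m n)), ← key n]
      refine integral_congr_ae (Filter.Eventually.of_forall fun ω => ?_)
      simp only [hf_def, Pi.mul_apply, Set.indicator]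
      split_ifs <;> simp
    rw [hCV0, add_zero]
    exact setIntegral_nonneg (hm _ (hA_m n)) fun ω _ => hnonneg _ _
  have htend : Filter.Tendsto (fun n => ∫ ω in A n, Z ω ∂μ) Filter.atTop
      (nhds (∫ ω, Z ω ∂μ)) := by
    have := tendsto_setIntegral_of_monotone (μ := μ) (f := Z)
      (fun n => hm _ (hA_m n)) hA_mono (by rw [hA_union]; exact hZ_int.integrableOn)
    rwa [hA_union, Measure.restrict_univ] at this
  have hZ_nonneg : 0 ≤ ∫ ω, Z ω ∂μ := ge_of_tendsto' htend hsetkey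
  rw [hZ_def, integral_sub ha_int hb_int] at hZ_nonneg
  linarith

/-- The conditional expectation minimizes the expected Bregman loss among all measurable
predictors: if `hstar` is a version of the conditional expectation `E[Y | X]` (i.e.
`hstar ∘ X` is a.e. equal to the conditional expectation of `Y` with respect to the σ-algebra
generated by `X`), then for every measurable `h : 𝒳 → ℝ` with `D(h(X), Y)` integrable,
`E[D(hstar(X), Y)] ≤ E[D(h(X), Y)]`. -/
theorem condexp_minimizes_bregmanLoss {Ω 𝒳 : Type*} [MeasurableSpace Ω]
    [MeasurableSpace 𝒳] [StandardBorelSpace 𝒳]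
    (μ : Measure Ω) [IsProbabilityMeasure μ]
    (g : ℝ → ℝ) (hg_convex : ConvexOn ℝ Set.univ g) (hg_diff : Differentiable ℝ g)
    (X : Ω → 𝒳) (hX : Measurable X)
    (Y : Ω → ℝ) (hY : Measurable Y) (hY_int : Integrable Y μ)
    (hgY_int : Integrable (fun ω => g (Y ω)) μ)
    (hstar : 𝒳 → ℝ) (hstar_meas : Measurable hstar)
    (hstar_ce : (fun ω => hstar (X ω)) =ᵐ[μ] μ[Y | MeasurableSpace.comap X inferInstance])
    (h : 𝒳 → ℝ) (h_meas : Measurable h)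
    (h_int : Integrable (fun ω => bregmanLoss g (h (X ω)) (Y ω)) μ) :
    ∫ ω, bregmanLoss g (hstar (X ω)) (Y ω) ∂μ ≤ ∫ ω, bregmanLoss g (h (X ω)) (Y ω) ∂μ := by
  by_cases hstar_int : Integrable (fun ω => bregmanLoss g (hstar (X ω)) (Y ω)) μ
  swap
  · rw [integral_undef hstar_int]
    exact integral_nonneg fun ω => bregmanLoss_nonneg' g hg_convex hg_diff _ _
  have hXm : Measurable[MeasurableSpace.comap X inferInstance] X := fun s hs => ⟨s, hs, rfl⟩
  exact bregman_aux hX.comap_le μ g hg_convex hg_diff Y hY_int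
    (fun ω => hstar (X ω)) (hstar_meas.comp hXm) hstar_ce
    (fun ω => h (X ω)) (h_meas.comp hXm) h_int hstar_int
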